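/- Let X = lim S, where S = (X_α, r^β_α, κ) is a continuous inverse sequence of compact Hausdorff spaces indexed by an ordinal κ such that X_0 is Valdivia compact and each successor bonding map r^{α+1}_α : X_{α+1} → X_α is a simple retraction. Then X is Valdivia compact. -/

import Mathlib

open Set Filter Topology

universe u v

/-- A continuous inverse sequence over a well-ordered index set `ι` (representing an
ordinal): continuous surjective bonding maps with identity and composition laws,
such that at every limit point `δ` of `ι` the map `X δ → Π_{α<δ} X α` is injective. -/
structure IsContInvSeq {ι : Type*} [LinearOrder ι] {X : ι → Type*}
    [∀ α, TopologicalSpace (X α)]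
    (r : ∀ ⦃α β : ι⦄, α ≤ β → X β → X α) : Prop where
  continuous : ∀ ⦃α β : ι⦄ (h : α ≤ β), Continuous (r h)
  surjective : ∀ ⦃α β : ι⦄ (h : α ≤ β), Function.Surjective (r h)
  map_id : ∀ (α : ι) (x : X α), r (le_refl α) x = x
  map_comp : ∀ ⦃α β γ : ι⦄ (h₁ : α ≤ β) (h₂ : β ≤ γ) (x : X γ),
    r h₁ (r h₂ x) = r (h₁.trans h₂) x
  limit_inj : ∀ δ : ι, (∃ α, α < δ) → (∀ α, α < δ → ∃ β, α < β ∧ β < δ) →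
    ∀ x y : X δ, (∀ (α : ι) (h : α < δ), r h.le x = r h.le y) → x = y

/-- The limit of an inverse sequence: the space of threads, a subspace of the
product `Π α, X α`. -/
abbrev InvLim {ι : Type*} [LinearOrder ι] {X : ι → Type*}
    [∀ α, TopologicalSpace (X α)]
    (r : ∀ ⦃α β : ι⦄, α ≤ β → X β → X α) : Type _ :=
  {x : ∀ α, X α // ∀ ⦃α β : ι⦄ (h : α ≤ β), r h (x β) = x α}

/-- A continuous surjection which admits a continuous right inverse. -/
def IsRetraction {X Y : Type*} [TopologicalSpace X] [TopologicalSpace Y]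
    (f : X → Y) : Prop :=
  Continuous f ∧ Function.Surjective f ∧ ∃ g : Y → X, Continuous g ∧ f ∘ g = id

/-- A simple retraction: a retraction `f` such that the image of every nonempty open
set contains a nonempty Gδ set, and `f` has a metrizable kernel, i.e. there is a
continuous `g : X → [0,1]^ℕ` with `x ↦ (f x, g x)` injective. -/
def IsSimpleRetraction {X Y : Type*} [TopologicalSpace X] [TopologicalSpace Y]
    (f : X → Y) : Prop :=
  IsRetraction f ∧
  (∀ u : Set X, IsOpen u → u.Nonempty → ∃ G : Set Y, G.Nonempty ∧ IsGδ G ∧ G ⊆ f '' u) ∧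
  ∃ g : X → ℕ → unitInterval, Continuous g ∧ Function.Injective (fun x => (f x, g x))

/-- `Σ(T)`: the points of the Tikhonov cube `[0,1]^T` with countable support. -/
def SigmaProd (T : Type*) : Set (T → unitInterval) :=
  {x | {t | x t ≠ 0}.Countable}

/-- A Valdivia embedding into the cube `[0,1]^T`. -/
def IsValdiviaEmbedding {X : Type*} [TopologicalSpace X] {T : Type*}
    (h : X → T → unitInterval) : Prop :=
  Topology.IsEmbedding h ∧ Set.range h = closure (Set.range h ∩ SigmaProd T)

/-- A space is Valdivia compact if it admits a Valdivia embedding into some cube. -/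
def IsValdivia (X : Type u) [TopologicalSpace X] : Prop :=
  ∃ (T : Type u) (h : X → T → unitInterval), IsValdiviaEmbedding h


set_option linter.unusedSectionVars false

theorem aux_dense_cc_meets_gdelta {K : Type*} [TopologicalSpace K] [CompactSpace K] [T2Space K]
    {D G : Set K} (hD : Dense D)
    (hcc : ∀ C : Set K, C ⊆ D → C.Countable → closure C ⊆ D)
    (hG : IsGδ G) (hne : G.Nonempty) : (D ∩ G).Nonempty := by
  obtain ⟨p, hp⟩ := hne
  obtain ⟨f, hfo, hGeq⟩ := hG.eq_iInter_nat
  have hpf : ∀ n, p ∈ f n := by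
    intro n; have := hGeq ▸ hp; exact mem_iInter.1 this n
  have key : ∀ (v : Set K), IsOpen v → p ∈ v → ∀ n : ℕ,
      ∃ w : Set K, IsOpen w ∧ p ∈ w ∧ closure w ⊆ v ∩ f n := by
    intro v hv hpv n
    obtain ⟨w, hwo, hpw, hwc⟩ := normal_exists_closure_subset (isClosed_singleton (x := p))
      (hv.inter (hfo n)) (by simp [hpv, hpf n])
    exact ⟨w, hwo, by simpa using hpw, hwc⟩
  choose W hWo hWp hWc using key
  let V : ℕ → {v : Set K // IsOpen v ∧ p ∈ v} := fun n =>
    Nat.rec ⟨W univ isOpen_univ (mem_univ p) 0, hWo _ _ _ _, hWp _ _ _ _⟩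
      (fun n prev => ⟨W prev.1 prev.2.1 prev.2.2 (n+1), hWo _ _ _ _, hWp _ _ _ _⟩) n
  have hVc : ∀ n, closure (V (n+1)).1 ⊆ (V n).1 ∩ f (n+1) := fun n => hWc _ _ _ _
  have hV0 : closure (V 0).1 ⊆ univ ∩ f 0 := hWc _ _ _ _
  have hstep : ∀ n, (V (n+1)).1 ⊆ (V n).1 := fun n =>
    subset_trans subset_closure (subset_trans (hVc n) inter_subset_left)
  have hmono : ∀ n m, n ≤ m → (V m).1 ⊆ (V n).1 := by
    intro n m h
    induction m with
    | zero => simp_all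
    | succ k ih =>
      rcases Nat.lt_or_ge n (k+1) with h' | h'
      · exact subset_trans (hstep k) (ih (Nat.lt_succ_iff.1 h'))
      · have : n = k + 1 := le_antisymm h h'
        subst this; exact subset_rfl
  have hdn : ∀ n : ℕ, ((V n).1 ∩ D).Nonempty := fun n =>
    hD.inter_open_nonempty (V n).1 (V n).2.1 ⟨p, (V n).2.2⟩
  choose d hd using hdn
  set A : ℕ → Set K := fun n => closure (d '' Set.Ici n) with hA
  have hAne : ∀ n, (A n).Nonempty := fun n => ⟨d n, subset_closure (mem_image_of_mem d (mem_Ici.2 le_rfl))⟩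
  have hAcl : ∀ n, IsClosed (A n) := fun n => isClosed_closure
  have hAmono : ∀ {n m}, n ≤ m → A m ⊆ A n := fun h =>
    closure_mono (image_mono (Ici_subset_Ici.2 h))
  have hz : (⋂ n, A n).Nonempty := by
    apply IsCompact.nonempty_iInter_of_directed_nonempty_isCompact_isClosed A
      (fun n m => ⟨max n m, hAmono (le_max_left _ _), hAmono (le_max_right _ _)⟩)
      hAne (fun n => (hAcl n).isCompact) hAcl
  obtain ⟨z, hz⟩ := hz
  have hzA : ∀ n, z ∈ A n := mem_iInter.1 hz
  have hzD : z ∈ D := by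
    have h1 : A 0 ⊆ closure (range d) := closure_mono (by rintro _ ⟨m, _, rfl⟩; exact ⟨m, rfl⟩)
    exact hcc (range d) (range_subset_iff.2 fun n => (hd n).2) (countable_range d) (h1 (hzA 0))
  have hzG : z ∈ ⋂ n, f n := by
    refine mem_iInter.2 fun n => ?_
    have h2 : A n ⊆ closure (V n).1 := by
      apply closure_mono; rintro _ ⟨m, hm, rfl⟩; exact hmono n m hm (hd m).1
    cases n with
    | zero => exact (hV0 (h2 (hzA 0))).2
    | succ k =>
      have := hVc k (h2 (hzA (k+1)))
      exact this.2
  exact ⟨z, hzD, hGeq ▸ hzG⟩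

theorem aux_sigma_cc {T : Type*} {C : Set (T → unitInterval)} (hC : C.Countable)
    (hCs : C ⊆ SigmaProd T) : closure C ⊆ SigmaProd T := by
  classical
  set S := ⋃ c ∈ C, {t | c t ≠ 0} with hSdef
  have hS : S.Countable := hC.biUnion (fun c hc => hCs hc)
  have hcl : closure C ⊆ {x | ∀ t, t ∉ S → x t = 0} := by
    apply closure_minimal
    · intro c hc t ht
      by_contra h
      exact ht (mem_biUnion hc h)
    · have : {x : T → unitInterval | ∀ t, t ∉ S → x t = 0}
          = ⋂ (t) (_ : t ∉ S), (fun x : T → unitInterval => x t) ⁻¹' {0} := by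
        ext x; simp
      rw [this]
      exact isClosed_iInter fun t => isClosed_iInter fun _ =>
        isClosed_singleton.preimage (continuous_apply t)
  intro x hx
  have : {t | x t ≠ 0} ⊆ S := fun t ht => by
    by_contra h; exact ht (hcl hx t h)
  exact hS.mono this



noncomputable def posPart01 (a b : unitInterval) : unitInterval :=
  ⟨max ((a : ℝ) - (b : ℝ)) 0, le_max_right _ _,
    max_le (by have h1 := a.2.2; have h2 := b.2.1; linarith [h1, h2]) zero_le_one⟩

theorem posPart01_self (a : unitInterval) : posPart01 a a = 0 := by
  apply Subtype.ext
  simp [posPart01]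

theorem posPart01_inj {a a' c : unitInterval}
    (h1 : posPart01 a c = posPart01 a' c) (h2 : posPart01 c a = posPart01 c a') : a = a' := by
  have key : ∀ x y : ℝ, x - y = max (x - y) 0 - max (y - x) 0 := by
    intro x y
    rcases le_total x y with h | h
    · rw [max_eq_right (sub_nonpos.2 h), max_eq_left (sub_nonneg.2 h)]; ring
    · rw [max_eq_left (sub_nonneg.2 h), max_eq_right (sub_nonpos.2 h)]; ring
  have e1 := congrArg Subtype.val h1
  have e2 := congrArg Subtype.val h2
  simp only [posPart01] at e1 e2
  apply Subtype.ext
  have : (a : ℝ) - c = (a' : ℝ) - c := by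
    rw [key (a : ℝ) (c : ℝ), key (a' : ℝ) (c : ℝ), e1, e2]
  linarith

theorem posPart01_continuous {Z : Type*} [TopologicalSpace Z] {f g : Z → unitInterval}
    (hf : Continuous f) (hg : Continuous g) : Continuous fun z => posPart01 (f z) (g z) :=
  Continuous.subtype_mk
    (((continuous_subtype_val.comp hf).sub (continuous_subtype_val.comp hg)).max
      continuous_const) _


section Main

variable {ι : Type v} [LinearOrder ι]

/-- `δ` is the immediate successor of `α`. -/
def IsCov (α δ : ι) : Prop := α < δ ∧ ∀ x, α < x → δ ≤ x

theorem IsCov.unique {α δ δ' : ι} (h : IsCov α δ) (h' : IsCov α δ') : δ = δ' :=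
  le_antisymm (h.2 δ' h'.1) (h'.2 δ h.1)

theorem IsCov.le_of_lt {α δ x : ι} (h : IsCov α δ) (hx : x < δ) : x ≤ α :=
  not_lt.1 fun hax => absurd (h.2 x hax) (not_le.2 hx)

variable [WellFoundedLT ι]

theorem exists_isCov {α β : ι} (h : α < β) : ∃ δ, IsCov α δ ∧ δ ≤ β := by
  have hne : {x : ι | α < x}.Nonempty := ⟨β, h⟩
  refine ⟨(IsWellFounded.wf (r := ((· < ·) : ι → ι → Prop))).min _ hne,
    ⟨(IsWellFounded.wf).min_mem _ hne, fun x hx => ?_⟩, (IsWellFounded.wf).min_le h⟩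
  exact (IsWellFounded.wf).min_le (hx : x ∈ {x : ι | α < x})

theorem max_or_limit [OrderBot ι] (γ : ι) (h : γ ≠ ⊥) :
    (∃ m, IsCov m γ) ∨ ((∃ α, α < γ) ∧ ∀ α, α < γ → ∃ β, α < β ∧ β < γ) := by
  by_cases hm : ∃ m, m < γ ∧ ∀ x, x < γ → x ≤ m
  · obtain ⟨m, hm1, hm2⟩ := hm
    exact Or.inl ⟨m, hm1, fun x hx => not_lt.1 fun hxγ => absurd (hm2 x hxγ) (not_le.2 hx)⟩
  · push_neg at hm
    refine Or.inr ⟨⟨⊥, h.bot_lt⟩, fun α hα => ?_⟩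
    obtain ⟨x, hx1, hx2⟩ := hm α hα
    exact ⟨x, hx2, hx1⟩

variable {X : ι → Type u} [∀ α, TopologicalSpace (X α)] [∀ α, CompactSpace (X α)]
    [∀ α, T2Space (X α)]
    (r : ∀ ⦃α β : ι⦄, α ≤ β → X β → X α)
    (sec : ∀ ⦃α δ : ι⦄, α < δ → X α → X δ)

/-- The set of indices at which a point of `X γ` is not section-consistent. -/
def badIdx (γ : ι) (z : X γ) : Set ι :=
  {α | ∃ δ, ∃ hc : IsCov α δ, ∃ hle : δ ≤ γ,
    r hle z ≠ sec hc.1 (r (hc.1.le.trans hle) z)}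

/-- `z : X γ` is a section-consistent extension of `y : X β`. -/
def IsGoodExt (β γ : ι) (hβγ : β ≤ γ) (y : X β) (z : X γ) : Prop :=
  r hβγ z = y ∧ ∀ ⦃α δ : ι⦄ (hc : IsCov α δ) (hδ : δ ≤ γ), β ≤ α →
    r hδ z = sec hc.1 (r (hc.1.le.trans hδ) z)

variable (hseq : IsContInvSeq r)
variable (hsec : ∀ ⦃α δ : ι⦄ (hc : IsCov α δ),
    Continuous (sec hc.1) ∧ ∀ x, r hc.1.le (sec hc.1 x) = x)

section lemmas
include hseq

theorem nonempty_all {β : ι} (y : X β) (α : ι) : Nonempty (X α) := by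
  rcases le_total α β with h | h
  · exact ⟨r h y⟩
  · obtain ⟨z, _⟩ := hseq.surjective h y
    exact ⟨z⟩

theorem isGoodExt_restrict {β γ₁ γ₂ : ι} {hβ₂ : β ≤ γ₂} {y : X β} {z : X γ₂}
    (hg : IsGoodExt r sec β γ₂ hβ₂ y z) (h₁₂ : γ₁ ≤ γ₂) (hβ₁ : β ≤ γ₁) :
    IsGoodExt r sec β γ₁ hβ₁ y (r h₁₂ z) := by
  constructor
  · rw [hseq.map_comp hβ₁ h₁₂ z]; exact hg.1
  · intro α δ hc hδ hβα
    rw [hseq.map_comp hδ h₁₂ z, hseq.map_comp (hc.1.le.trans hδ) h₁₂ z]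
    exact hg.2 hc (hδ.trans h₁₂) hβα

theorem isClosed_goodExt (hsec : ∀ ⦃α δ : ι⦄ (hc : IsCov α δ),
    Continuous (sec hc.1) ∧ ∀ x, r hc.1.le (sec hc.1 x) = x)
    {β γ : ι} (hβγ : β ≤ γ) (y : X β) :
    IsClosed {z : X γ | IsGoodExt r sec β γ hβγ y z} := by
  have : {z : X γ | IsGoodExt r sec β γ hβγ y z} =
      {z : X γ | r hβγ z = y} ∩
      ⋂ (α : ι) (δ : ι) (hc : IsCov α δ) (hδ : δ ≤ γ) (_ : β ≤ α),
        {z : X γ | r hδ z = sec hc.1 (r (hc.1.le.trans hδ) z)} := by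
    ext z
    simp only [mem_setOf_eq, mem_inter_iff, mem_iInter]
    exact ⟨fun H => ⟨H.1, fun α δ hc hδ hβα => H.2 hc hδ hβα⟩,
      fun H => ⟨H.1, fun α δ hc hδ hβα => H.2 α δ hc hδ hβα⟩⟩
  rw [this]
  refine (isClosed_eq (hseq.continuous hβγ) continuous_const).inter
    (isClosed_iInter fun α => isClosed_iInter fun δ => isClosed_iInter fun hc =>
      isClosed_iInter fun hδ => isClosed_iInter fun _ => isClosed_eq (hseq.continuous hδ)
        (((hsec hc).1).comp (hseq.continuous _)))

include hsec

theorem exists_goodExt (β : ι) (y : X β) :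
    ∀ γ (hβγ : β ≤ γ), ∃ z : X γ, IsGoodExt r sec β γ hβγ y z := by
  intro γ
  induction γ using WellFoundedLT.induction with
  | _ γ IH =>
    intro hβγ
    rcases eq_or_lt_of_le hβγ with rfl | hlt
    · refine ⟨y, hseq.map_id β y, fun α δ hc hδ hβα => ?_⟩
      exact absurd ((hc.1.trans_le hδ).trans_le hβα) (lt_irrefl α)
    · by_cases hmax : ∃ m, IsCov m γ
      · -- successor case
        obtain ⟨m, hm⟩ := hmax
        have hβm : β ≤ m := hm.le_of_lt hlt
        obtain ⟨z', hz'⟩ := IH m hm.1 hβm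
        refine ⟨sec hm.1 z', ?_, ?_⟩
        · have h1 : r hm.1.le (sec hm.1 z') = z' := (hsec hm).2 z'
          calc r hβγ (sec hm.1 z') = r hβm (r hm.1.le (sec hm.1 z')) :=
                (hseq.map_comp hβm hm.1.le _).symm
            _ = y := by rw [h1]; exact hz'.1
        · intro α δ hc hδ hβα
          have h1 : r hm.1.le (sec hm.1 z') = z' := (hsec hm).2 z'
          rcases hδ.lt_or_eq with hδlt | rfl
          · have hδm : δ ≤ m := hm.le_of_lt hδlt
            have hαm : α ≤ m := hc.1.le.trans hδm
            have e1 : r hδ (sec hm.1 z') = r hδm z' := by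
              calc r hδ (sec hm.1 z') = r hδm (r hm.1.le (sec hm.1 z')) :=
                    (hseq.map_comp hδm hm.1.le _).symm
                _ = r hδm z' := by rw [h1]
            have e2 : r (hc.1.le.trans hδ) (sec hm.1 z') = r hαm z' := by
              calc r (hc.1.le.trans hδ) (sec hm.1 z')
                    = r hαm (r hm.1.le (sec hm.1 z')) := (hseq.map_comp hαm hm.1.le _).symm
                _ = r hαm z' := by rw [h1]
            rw [e1, e2]
            exact hz'.2 hc hδm hβα
          · -- δ = γ ; then α = m
            have hαm : α = m := by
              have h2 : α ≤ m := hm.le_of_lt hc.1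
              have h3 : m ≤ α := hc.le_of_lt hm.1
              exact le_antisymm h2 h3
            subst hαm
            have e1 : r hδ (sec hm.1 z') = sec hm.1 z' := hseq.map_id _ _
            have e2 : r (hc.1.le.trans hδ) (sec hm.1 z') = z' := (hsec hm).2 z'
            rw [e1, e2]
      · -- limit case
        have hlim : ∀ α, α < γ → ∃ x, α < x ∧ x < γ := by
          intro α hα
          obtain ⟨δ, hδc, hδle⟩ := exists_isCov hα
          rcases hδle.lt_or_eq with h | rfl
          · exact ⟨δ, hδc.1, h⟩
          · exact absurd ⟨α, hδc⟩ hmax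
        set S : Type v := {γ' : ι // β ≤ γ' ∧ γ' < γ}
        have hSne : Nonempty S := ⟨⟨β, le_rfl, hlt⟩⟩
        set t : S → Set (X γ) := fun i =>
          r i.2.2.le ⁻¹' {z' : X i.1 | IsGoodExt r sec β i.1 i.2.1 y z'} with ht
        have htcl : ∀ i, IsClosed (t i) := fun i =>
          (isClosed_goodExt r sec hseq hsec i.2.1 y).preimage (hseq.continuous _)
        have htne : ∀ i, (t i).Nonempty := by
          intro i
          obtain ⟨z', hz'⟩ := IH i.1 i.2.2 i.2.1
          obtain ⟨z, hz⟩ := hseq.surjective i.2.2.le z'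
          exact ⟨z, by simp only [ht, mem_preimage, hz]; exact hz'⟩
        have htdir : Directed (· ⊇ ·) t := by
          intro i j
          rcases le_total i.1 j.1 with h | h
          · refine ⟨j, ?_, fun z hz => hz⟩
            intro z hz
            have := isGoodExt_restrict r sec hseq (hz : IsGoodExt r sec β j.1 j.2.1 y _) h i.2.1
            simpa only [ht, mem_preimage, mem_setOf_eq, hseq.map_comp h j.2.2.le z] using this
          · refine ⟨i, fun z hz => hz, ?_⟩
            intro z hz
            have := isGoodExt_restrict r sec hseq (hz : IsGoodExt r sec β i.1 i.2.1 y _) h j.2.1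
            simpa only [ht, mem_preimage, mem_setOf_eq, hseq.map_comp h i.2.2.le z] using this
        obtain ⟨z, hz⟩ := IsCompact.nonempty_iInter_of_directed_nonempty_isCompact_isClosed t
          htdir htne (fun i => (htcl i).isCompact) htcl
        have hzt : ∀ i : S, IsGoodExt r sec β i.1 i.2.1 y (r i.2.2.le z) :=
          fun i => mem_iInter.1 hz i
        refine ⟨z, ?_, ?_⟩
        · have := (hzt ⟨β, le_rfl, hlt⟩).1
          rw [hseq.map_comp le_rfl hlt.le z] at this
          exact this
        · intro α δ hc hδ hβα
          rcases hδ.lt_or_eq with hδlt | rfl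
          · have := (hzt ⟨δ, hβα.trans hc.1.le, hδlt⟩).2 hc le_rfl hβα
            rw [hseq.map_comp (le_refl δ) hδlt.le z,
              hseq.map_comp hc.1.le hδlt.le z]  at this
            exact this
          · exfalso
            obtain ⟨x, hx1, hx2⟩ := hlim α (hc.1.trans_le hδ)
            exact absurd (hc.2 x hx1) (not_le.2 hx2)

end lemmas

section Good
variable [OrderBot ι] (D0 : Set (X ⊥))

/-- Points of `X γ` whose bottom projection is in `D0` and which are
section-consistent outside a countable set of indices. -/
def goodSet (γ : ι) : Set (X γ) :=
  {z | r bot_le z ∈ D0 ∧ (badIdx r sec γ z).Countable}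

include hseq hsec

theorem goodSet_cc (γ : ι)
    (hD0cc : ∀ C : Set (X ⊥), C ⊆ D0 → C.Countable → closure C ⊆ D0) :
    ∀ C : Set (X γ), C ⊆ goodSet r sec D0 γ → C.Countable →
      closure C ⊆ goodSet r sec D0 γ := by
  intro C hCsub hCc z hz
  constructor
  · have h1 : r bot_le z ∈ r bot_le '' closure C := mem_image_of_mem _ hz
    have h2 : r bot_le '' closure C ⊆ closure (r bot_le '' C) :=
      image_closure_subset_closure_image (hseq.continuous _)
    exact hD0cc _ (image_subset_iff.2 fun c hc => (hCsub hc).1) (hCc.image _) (h2 h1)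
  · have hSc : (⋃ c ∈ C, badIdx r sec γ c).Countable :=
      hCc.biUnion fun c hc => (hCsub hc).2
    refine hSc.mono ?_
    intro α hα
    obtain ⟨δ, hc, hle, hne⟩ := hα
    by_contra hS
    apply hne
    have hCsub2 : C ⊆ {w : X γ | r hle w = sec hc.1 (r (hc.1.le.trans hle) w)} := by
      intro c hcC
      by_contra hcne
      exact hS (mem_biUnion hcC ⟨δ, hc, hle, hcne⟩)
    have hcl : IsClosed {w : X γ | r hle w = sec hc.1 (r (hc.1.le.trans hle) w)} :=
      isClosed_eq (hseq.continuous _) ((hsec hc).1.comp (hseq.continuous _))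
    exact closure_minimal hCsub2 hcl hz

theorem goodSet_dense
    (hD0 : Dense D0)
    (hD0cc : ∀ C : Set (X ⊥), C ⊆ D0 → C.Countable → closure C ⊆ D0)
    (hGδ : ∀ ⦃α δ : ι⦄ (hc : IsCov α δ) (u : Set (X δ)), IsOpen u → u.Nonempty →
      ∃ G : Set (X α), G.Nonempty ∧ IsGδ G ∧ G ⊆ r hc.1.le '' u) :
    ∀ γ : ι, Dense (goodSet r sec D0 γ) := by
  intro γ
  induction γ using WellFoundedLT.induction with
  | _ γ IH =>
    by_cases hγ : γ = ⊥
    · subst hγ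
      have hsub : D0 ⊆ goodSet r sec D0 ⊥ := by
        intro z hz
        constructor
        · have e : r bot_le z = z := hseq.map_id ⊥ z
          rwa [e]
        · have : badIdx r sec (⊥ : ι) z = ∅ := by
            rw [eq_empty_iff_forall_notMem]
            rintro α ⟨δ, hc, hle, -⟩
            exact absurd (hc.1.trans_le hle) (not_lt_bot)
          rw [this]; exact countable_empty
      exact Dense.mono hsub hD0
    · rcases max_or_limit γ hγ with ⟨m, hm⟩ | ⟨hne, hlim⟩
      · -- successor case
        rw [dense_iff_inter_open]
        intro v hv hvne
        obtain ⟨G, hGne, hGd, hGsub⟩ := hGδ hm v hv hvne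
        obtain ⟨y, hyD, hyG⟩ := aux_dense_cc_meets_gdelta (IH m hm.1)
          (goodSet_cc r sec hseq hsec D0 m hD0cc) hGd hGne
        obtain ⟨z, hzv, hzy⟩ := hGsub hyG
        refine ⟨z, hzv, ?_, ?_⟩
        · have e : r bot_le z = r bot_le y := by
            rw [← hzy, hseq.map_comp bot_le hm.1.le z]
          rw [e]; exact hyD.1
        · apply Set.Countable.mono ?_ ((hyD.2).insert m)
          rintro α ⟨δ, hc, hle, hneq⟩
          rcases hle.lt_or_eq with hlt' | rfl
          · have hδm : δ ≤ m := hm.le_of_lt hlt'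
            refine mem_insert_of_mem _ ⟨δ, hc, hδm, ?_⟩
            intro heq
            apply hneq
            have e1 : r hle z = r hδm y := by
              rw [← hzy, hseq.map_comp hδm hm.1.le z]
            have e2 : r (hc.1.le.trans hle) z = r (hc.1.le.trans hδm) y := by
              rw [← hzy, hseq.map_comp (hc.1.le.trans hδm) hm.1.le z]
            rw [e1, e2]; exact heq
          · have hαm : α = m :=
              le_antisymm (hm.le_of_lt hc.1) (hc.le_of_lt hm.1)
            rw [hαm]; exact mem_insert _ _
      · -- limit case
        rw [dense_iff_inter_open]
        intro v hv hvne
        obtain ⟨z₀, hz₀⟩ := hvne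
        classical
        set ψ : X γ → ∀ i : {α : ι // α < γ}, X i.1 := fun z i => r i.2.le z with hψ
        have hψc : Continuous ψ := continuous_pi fun i => hseq.continuous _
        have hψi : Function.Injective ψ := fun a b hab =>
          hseq.limit_inj γ hne hlim a b fun α h => congrFun hab ⟨α, h⟩
        have hemb := hψc.isClosedEmbedding hψi
        obtain ⟨W, hWo, hWv⟩ := hemb.isInducing.isOpen_iff.1 hv
        have hz₀W : ψ z₀ ∈ W := by rw [← hWv] at hz₀; exact hz₀
        obtain ⟨I, u, hu, hIW⟩ := isOpen_pi_iff.1 hWo (ψ z₀) hz₀W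
        set A : Finset ι := insert ⊥ (I.image Subtype.val) with hA
        have hAne : A.Nonempty := ⟨⊥, Finset.mem_insert_self _ _⟩
        set αs : ι := A.max' hAne with hαs
        have hαsγ : αs < γ := by
          have hmem : αs ∈ A := A.max'_mem hAne
          rw [hA, Finset.mem_insert] at hmem
          rcases hmem with h | h
          · rw [h]; exact Ne.bot_lt hγ
          · obtain ⟨i, _, hieq⟩ := Finset.mem_image.1 h
            rw [← hieq]; exact i.2
        have hle_αs : ∀ i : {α : ι // α < γ}, i ∈ I → i.1 ≤ αs := fun i hi =>
          Finset.le_max' A i.1 (Finset.mem_insert_of_mem (Finset.mem_image_of_mem _ hi))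
        set v' : Set (X αs) := ⋂ i : {j : {α : ι // α < γ} // j ∈ I},
          r (hle_αs i.1 i.2) ⁻¹' (u i.1) with hv'
        have hv'o : IsOpen v' := isOpen_iInter_of_finite fun i =>
          ((hu i.1 i.2).1).preimage (hseq.continuous _)
        have hz₀v' : r hαsγ.le z₀ ∈ v' := by
          refine mem_iInter.2 fun i => ?_
          have e : r (hle_αs i.1 i.2) (r hαsγ.le z₀) = r i.1.2.le z₀ :=
            hseq.map_comp _ _ z₀
          rw [mem_preimage, e]
          exact (hu i.1 i.2).2
        obtain ⟨y, hyv', hyD⟩ := (IH αs hαsγ).inter_open_nonempty v' hv'o ⟨_, hz₀v'⟩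
        obtain ⟨z, hz⟩ := exists_goodExt r sec hseq hsec αs y γ hαsγ.le
        refine ⟨z, ?_, ?_, ?_⟩
        · rw [← hWv]
          apply hIW
          rw [Set.mem_pi]
          intro i hi
          have e : r i.2.le z = r (hle_αs i hi) y := by
            rw [← hz.1, hseq.map_comp (hle_αs i hi) hαsγ.le z]
          show r i.2.le z ∈ u i
          rw [e]
          exact mem_iInter.1 hyv' ⟨i, hi⟩
        · have e : r bot_le z = r bot_le y := by
            rw [← hz.1, hseq.map_comp bot_le hαsγ.le z]
          rw [e]; exact hyD.1
        · apply Set.Countable.mono ?_ hyD.2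
          rintro α ⟨δ, hc, hle, hneq⟩
          rcases hle.lt_or_eq with hδγ | rfl
          · by_cases hααs : αs ≤ α
            · exact absurd (hz.2 hc hle hααs) hneq
            · push_neg at hααs
              have hδαs : δ ≤ αs := hc.2 αs hααs
              refine ⟨δ, hc, hδαs, ?_⟩
              intro heq
              apply hneq
              have e1 : r hle z = r hδαs y := by
                rw [← hz.1, hseq.map_comp hδαs hαsγ.le z]
              have e2 : r (hc.1.le.trans hle) z = r (hc.1.le.trans hδαs) y := by
                rw [← hz.1, hseq.map_comp (hc.1.le.trans hδαs) hαsγ.le z]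
              rw [e1, e2]; exact heq
          · exfalso
            obtain ⟨x, hx1, hx2⟩ := hlim α hc.1
            exact absurd (hc.2 x hx1) (not_le.2 hx2)

theorem exists_thread_ext (β : ι) (y : X β) :
    ∃ x : InvLim r, x.1 β = y ∧
      ∀ ⦃α δ : ι⦄ (hc : IsCov α δ), β ≤ α → x.1 δ = sec hc.1 (x.1 α) := by
  classical
  haveI : Nonempty ι := ⟨⊥⟩
  have hne : ∀ a, Nonempty (X a) := nonempty_all r hseq y
  set C : ι → Set (∀ a, X a) := fun γ =>
    {f | (∀ ⦃a b : ι⦄ (h : a ≤ b), b ≤ γ → r h (f b) = f a) ∧ (β ≤ γ → f β = y) ∧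
      (∀ ⦃α δ : ι⦄ (hc : IsCov α δ), δ ≤ γ → β ≤ α → f δ = sec hc.1 (f α))} with hC
  have hCcl : ∀ γ, IsClosed (C γ) := by
    intro γ
    have hCeq : C γ =
        (⋂ (a : ι) (b : ι) (h : a ≤ b) (_ : b ≤ γ), {f : ∀ a, X a | r h (f b) = f a}) ∩
        ((⋂ (_ : β ≤ γ), {f : ∀ a, X a | f β = y}) ∩
         (⋂ (α : ι) (δ : ι) (hc : IsCov α δ) (_ : δ ≤ γ) (_ : β ≤ α),
            {f : ∀ a, X a | f δ = sec hc.1 (f α)})) := by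
      ext f
      simp only [hC, mem_setOf_eq, mem_inter_iff, mem_iInter]
    rw [hCeq]
    refine IsClosed.inter ?_ (IsClosed.inter ?_ ?_)
    · exact isClosed_iInter fun a => isClosed_iInter fun b => isClosed_iInter fun h =>
        isClosed_iInter fun _ => isClosed_eq ((hseq.continuous h).comp (continuous_apply b))
          (continuous_apply a)
    · exact isClosed_iInter fun _ => isClosed_eq (continuous_apply β) continuous_const
    · exact isClosed_iInter fun α => isClosed_iInter fun δ => isClosed_iInter fun hc =>
        isClosed_iInter fun _ => isClosed_iInter fun _ =>
          isClosed_eq (continuous_apply δ) (((hsec hc).1).comp (continuous_apply α))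
  have hCne : ∀ γ, (C γ).Nonempty := by
    intro γ
    obtain ⟨z, hz⟩ := exists_goodExt r sec hseq hsec β y (max β γ) (le_max_left _ _)
    refine ⟨fun a => if h : a ≤ max β γ then r h z else (hne a).some, ?_, ?_, ?_⟩
    · intro a b h hb
      have hbm : b ≤ max β γ := hb.trans (le_max_right _ _)
      have ham : a ≤ max β γ := h.trans hbm
      simp only [dif_pos hbm, dif_pos ham]
      exact hseq.map_comp h hbm z
    · intro _
      simp only [dif_pos (le_max_left β γ)]
      exact hz.1
    · intro α δ hc hδ hβα
      have hδm : δ ≤ max β γ := hδ.trans (le_max_right _ _)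
      have hαm : α ≤ max β γ := hc.1.le.trans hδm
      simp only [dif_pos hδm, dif_pos hαm]
      exact hz.2 hc hδm hβα
  have hCdir : Directed (· ⊇ ·) C := by
    have hmono : ∀ {γ γ' : ι}, γ ≤ γ' → C γ' ⊆ C γ := by
      intro γ γ' hγ f hf
      exact ⟨fun a b h hb => hf.1 h (hb.trans hγ), fun hβ => hf.2.1 (hβ.trans hγ),
        fun α δ hc hδ hβα => hf.2.2 hc (hδ.trans hγ) hβα⟩
    intro i j
    exact ⟨max i j, hmono (le_max_left _ _), hmono (le_max_right _ _)⟩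
  obtain ⟨f, hf⟩ := IsCompact.nonempty_iInter_of_directed_nonempty_isCompact_isClosed C
    hCdir hCne (fun γ => (hCcl γ).isCompact) hCcl
  have hfC : ∀ γ, f ∈ C γ := mem_iInter.1 hf
  have hthread : ∀ ⦃a b : ι⦄ (h : a ≤ b), r h (f b) = f a := fun a b h =>
    (hfC b).1 h le_rfl
  exact ⟨⟨f, hthread⟩, (hfC β).2.1 le_rfl, fun α δ hc hβα => (hfC δ).2.2 hc le_rfl hβα⟩

theorem denseThreads
    (hD0 : Dense D0)
    (hD0cc : ∀ C : Set (X ⊥), C ⊆ D0 → C.Countable → closure C ⊆ D0)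
    (hGδ : ∀ ⦃α δ : ι⦄ (hc : IsCov α δ) (u : Set (X δ)), IsOpen u → u.Nonempty →
      ∃ G : Set (X α), G.Nonempty ∧ IsGδ G ∧ G ⊆ r hc.1.le '' u) :
    Dense {x : InvLim r | x.1 ⊥ ∈ D0 ∧
      {α : ι | ∃ δ, ∃ hc : IsCov α δ, x.1 δ ≠ sec hc.1 (x.1 α)}.Countable} := by
  classical
  rw [dense_iff_inter_open]
  intro v hv hvne
  obtain ⟨x₀, hx₀⟩ := hvne
  obtain ⟨W, hWo, hWv⟩ := (Topology.IsInducing.subtypeVal).isOpen_iff.1 hv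
  have hx₀W : x₀.1 ∈ W := by
    rw [← hWv] at hx₀; exact hx₀
  obtain ⟨I, u, hu, hIW⟩ := isOpen_pi_iff.1 hWo x₀.1 hx₀W
  set A : Finset ι := insert ⊥ I with hA
  have hAne : A.Nonempty := ⟨⊥, Finset.mem_insert_self _ _⟩
  set αs : ι := A.max' hAne with hαs
  have hle_αs : ∀ i ∈ I, i ≤ αs := fun i hi =>
    Finset.le_max' A i (Finset.mem_insert_of_mem hi)
  set v' : Set (X αs) := ⋂ i : {j : ι // j ∈ I},
    r (hle_αs i.1 i.2) ⁻¹' (u i.1) with hv'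
  have hv'o : IsOpen v' := isOpen_iInter_of_finite fun i =>
    ((hu i.1 i.2).1).preimage (hseq.continuous _)
  have hx₀v' : x₀.1 αs ∈ v' := by
    refine mem_iInter.2 fun i => ?_
    rw [mem_preimage, x₀.2 (hle_αs i.1 i.2)]
    exact (hu i.1 i.2).2
  obtain ⟨y, hyv', hyD⟩ := (goodSet_dense r sec hseq hsec D0 hD0 hD0cc hGδ αs).inter_open_nonempty
    v' hv'o ⟨_, hx₀v'⟩
  obtain ⟨x, hxαs, hxsec⟩ := exists_thread_ext r sec hseq hsec αs y
  refine ⟨x, ?_, ?_, ?_⟩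
  · rw [← hWv]
    show x.1 ∈ W
    apply hIW
    rw [Set.mem_pi]
    intro i hi
    have e : x.1 i = r (hle_αs i hi) y := by
      rw [← hxαs]; exact (x.2 (hle_αs i hi)).symm
    rw [e]
    exact mem_iInter.1 hyv' ⟨i, hi⟩
  · have e : x.1 ⊥ = r bot_le y := by
      rw [← hxαs]; exact (x.2 bot_le).symm
    rw [e]; exact hyD.1
  · apply Set.Countable.mono ?_ hyD.2
    rintro α ⟨δ, hc, hneq⟩
    by_cases hααs : αs ≤ α
    · exact absurd (hxsec hc hααs) hneq
    · push_neg at hααs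
      have hδαs : δ ≤ αs := hc.2 αs hααs
      refine ⟨δ, hc, hδαs, ?_⟩
      intro heq
      apply hneq
      have e1 : x.1 δ = r hδαs y := by rw [← hxαs]; exact (x.2 hδαs).symm
      have e2 : x.1 α = r (hc.1.le.trans hδαs) y := by
        rw [← hxαs]; exact (x.2 (hc.1.le.trans hδαs)).symm
      rw [e1, e2]; exact heq

theorem isClosed_threads :
    IsClosed {x : ∀ a, X a | ∀ ⦃α β : ι⦄ (h : α ≤ β), r h (x β) = x α} := by
  have heq : {x : ∀ a, X a | ∀ ⦃α β : ι⦄ (h : α ≤ β), r h (x β) = x α} =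
      ⋂ (α : ι) (β : ι) (h : α ≤ β), {x : ∀ a, X a | r h (x β) = x α} := by
    ext x
    simp only [mem_setOf_eq, mem_iInter]
  rw [heq]
  exact isClosed_iInter fun α => isClosed_iInter fun β => isClosed_iInter fun h =>
    isClosed_eq ((hseq.continuous h).comp (continuous_apply β)) (continuous_apply α)

end Good

section Final
variable [OrderBot ι] {T₀ : Type u}

/-- The Valdivia embedding of the inverse limit. -/
noncomputable def bigH (h₀ : X ⊥ → T₀ → unitInterval)
    (gk : ∀ q : {p : ι × ι // IsCov p.1 p.2}, X q.1.2 → ℕ → unitInterval)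
    (x : InvLim r) : T₀ ⊕ ({p : ι × ι // IsCov p.1 p.2} × ℕ × Bool) → unitInterval
  | Sum.inl t₀ => h₀ (x.1 ⊥) t₀
  | Sum.inr (q, n, b) =>
      cond b (posPart01 (gk q (x.1 q.1.2) n) (gk q (sec q.2.1 (x.1 q.1.1)) n))
        (posPart01 (gk q (sec q.2.1 (x.1 q.1.1)) n) (gk q (x.1 q.1.2) n))

include hsec in
theorem bigH_continuous (h₀ : X ⊥ → T₀ → unitInterval)
    (gk : ∀ q : {p : ι × ι // IsCov p.1 p.2}, X q.1.2 → ℕ → unitInterval)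
    (hh₀ : Continuous h₀) (hgk : ∀ q, Continuous (gk q)) :
    Continuous (bigH r sec h₀ gk) := by
  apply continuous_pi
  rintro (t₀ | ⟨q, n, b⟩)
  · show Continuous fun x : InvLim r => h₀ (x.1 ⊥) t₀
    exact (continuous_apply t₀).comp
      (hh₀.comp ((continuous_apply (⊥ : ι)).comp continuous_subtype_val))
  · have hc1 : Continuous fun x : InvLim r => gk q (x.1 q.1.2) n :=
      (continuous_apply n).comp
        ((hgk q).comp ((continuous_apply q.1.2).comp continuous_subtype_val))
    have hc2 : Continuous fun x : InvLim r => gk q (sec q.2.1 (x.1 q.1.1)) n :=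
      (continuous_apply n).comp ((hgk q).comp (((hsec q.2).1).comp
        ((continuous_apply q.1.1).comp continuous_subtype_val)))
    cases b
    · exact posPart01_continuous hc2 hc1
    · exact posPart01_continuous hc1 hc2

include hseq hsec in
theorem bigH_injective (h₀ : X ⊥ → T₀ → unitInterval)
    (gk : ∀ q : {p : ι × ι // IsCov p.1 p.2}, X q.1.2 → ℕ → unitInterval)
    (hinj₀ : Function.Injective h₀)
    (hgki : ∀ q : {p : ι × ι // IsCov p.1 p.2},
      Function.Injective fun z => (r q.2.1.le z, gk q z)) :
    Function.Injective (bigH r sec h₀ gk) := by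
  have key : ∀ (α : ι) (x y : InvLim r), bigH r sec h₀ gk x = bigH r sec h₀ gk y →
      x.1 α = y.1 α := by
    intro α
    induction α using WellFoundedLT.induction with
    | _ α IHα =>
      intro x y hxy
      by_cases hα : α = ⊥
      · subst hα
        have hco : ∀ t₀, h₀ (x.1 ⊥) t₀ = h₀ (y.1 ⊥) t₀ := fun t₀ =>
          congrFun hxy (Sum.inl t₀)
        exact hinj₀ (funext hco)
      · rcases max_or_limit α hα with ⟨m, hm⟩ | ⟨hne, hlim⟩
        · set q : {p : ι × ι // IsCov p.1 p.2} := ⟨(m, α), hm⟩ with hq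
          have hxm : x.1 m = y.1 m := IHα m hm.1 x y hxy
          have hg : gk q (x.1 α) = gk q (y.1 α) := by
            funext n
            have h1 : posPart01 (gk q (x.1 α) n) (gk q (sec hm.1 (x.1 m)) n)
                = posPart01 (gk q (y.1 α) n) (gk q (sec hm.1 (y.1 m)) n) :=
              congrFun hxy (Sum.inr (q, n, true))
            have h2 : posPart01 (gk q (sec hm.1 (x.1 m)) n) (gk q (x.1 α) n)
                = posPart01 (gk q (sec hm.1 (y.1 m)) n) (gk q (y.1 α) n) :=
              congrFun hxy (Sum.inr (q, n, false))
            rw [hxm] at h1 h2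
            exact posPart01_inj h1 h2
          have hpair : (r q.2.1.le (x.1 α), gk q (x.1 α))
              = (r q.2.1.le (y.1 α), gk q (y.1 α)) := by
            rw [x.2 hm.1.le, y.2 hm.1.le, hxm, hg]
          exact hgki q hpair
        · apply hseq.limit_inj α hne hlim
          intro β h
          rw [x.2 h.le, y.2 h.le]
          exact IHα β h x y hxy
  intro x y hxy
  exact Subtype.ext (funext fun α => key α x y hxy)

theorem bigH_sigma (h₀ : X ⊥ → T₀ → unitInterval)
    (gk : ∀ q : {p : ι × ι // IsCov p.1 p.2}, X q.1.2 → ℕ → unitInterval)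
    (x : InvLim r)
    (hx0 : {t₀ : T₀ | h₀ (x.1 ⊥) t₀ ≠ 0}.Countable)
    (hbad : {α : ι | ∃ δ, ∃ hc : IsCov α δ, x.1 δ ≠ sec hc.1 (x.1 α)}.Countable) :
    bigH r sec h₀ gk x ∈ SigmaProd (T₀ ⊕ ({p : ι × ι // IsCov p.1 p.2} × ℕ × Bool)) := by
  classical
  set Bad := {α : ι | ∃ δ, ∃ hc : IsCov α δ, x.1 δ ≠ sec hc.1 (x.1 α)} with hBadDef
  show {t | bigH r sec h₀ gk x t ≠ 0}.Countable
  have hsub : {t | bigH r sec h₀ gk x t ≠ 0} ⊆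
      (Sum.inl '' {t₀ : T₀ | h₀ (x.1 ⊥) t₀ ≠ 0}) ∪
      (Sum.inr '' {w : {p : ι × ι // IsCov p.1 p.2} × ℕ × Bool | w.1.1.1 ∈ Bad}) := by
    rintro (t₀ | ⟨q, n, b⟩) ht
    · exact Or.inl ⟨t₀, ht, rfl⟩
    · refine Or.inr ⟨(q, n, b), ?_, rfl⟩
      show q.1.1 ∈ Bad
      by_contra hqB
      have hEq : x.1 q.1.2 = sec q.2.1 (x.1 q.1.1) := by
        by_contra hne
        exact hqB ⟨q.1.2, q.2, hne⟩
      apply ht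
      cases b
      · show posPart01 (gk q (sec q.2.1 (x.1 q.1.1)) n) (gk q (x.1 q.1.2) n) = 0
        rw [hEq]
        exact posPart01_self _
      · show posPart01 (gk q (x.1 q.1.2) n) (gk q (sec q.2.1 (x.1 q.1.1)) n) = 0
        rw [hEq]
        exact posPart01_self _
  refine Set.Countable.mono hsub (Set.Countable.union (hx0.image _) (Set.Countable.image ?_ _))
  have hss : ∀ α : ι, {q : {p : ι × ι // IsCov p.1 p.2} | q.1.1 = α}.Subsingleton := by
    intro α q hq q' hq'
    have h1 : q.1.1 = q'.1.1 := hq.trans hq'.symm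
    have h2 : q.1.2 = q'.1.2 := by
      have hc' := q'.2
      rw [← h1] at hc'
      exact IsCov.unique q.2 hc'
    exact Subtype.ext (Prod.ext h1 h2)
  have hcover : {w : {p : ι × ι // IsCov p.1 p.2} × ℕ × Bool | w.1.1.1 ∈ Bad} ⊆
      ⋃ α ∈ Bad, ⋃ q ∈ {q : {p : ι × ι // IsCov p.1 p.2} | q.1.1 = α},
        ({q} ×ˢ (univ : Set (ℕ × Bool))) := by
    intro w hw
    refine mem_biUnion hw (mem_biUnion (show w.1 ∈ {q : {p : ι × ι // IsCov p.1 p.2} |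
      q.1.1 = w.1.1.1} from rfl) ?_)
    exact ⟨rfl, mem_univ _⟩
  refine Set.Countable.mono hcover (hbad.biUnion fun α _ => ?_)
  exact Set.Countable.biUnion ((hss α).countable) fun q _ =>
    (countable_singleton q).prod countable_univ

end Final
end Main


/-- the limit of a continuous inverse sequence of compact Hausdorff
spaces, indexed by an ordinal (here: a well-ordered set with least element `⊥`),
whose first space is Valdivia compact and whose successor bonding maps are simple
retractions, is Valdivia compact. -/
theorem statement10 {ι : Type v} [LinearOrder ι] [WellFoundedLT ι] [OrderBot ι]
    {X : ι → Type u} [∀ α, TopologicalSpace (X α)] [∀ α, CompactSpace (X α)]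
    [∀ α, T2Space (X α)]
    (r : ∀ ⦃α β : ι⦄, α ≤ β → X β → X α) (hseq : IsContInvSeq r)
    (h0 : IsValdivia (X ⊥))
    (hsucc : ∀ (α β : ι) (h : α < β), (∀ γ, α < γ → β ≤ γ) →
      IsSimpleRetraction (r h.le)) :
    IsValdivia (InvLim r) := by
  classical
  obtain ⟨T₀, h₀, hemb₀, hrange₀⟩ := h0
  have secEx : ∀ (α δ : ι) (h : α < δ), ∃ s : X α → X δ,
      (∀ x, r h.le (s x) = x) ∧ ((∀ x, α < x → δ ≤ x) → Continuous s) := by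
    intro α δ h
    by_cases hcov : ∀ x, α < x → δ ≤ x
    · obtain ⟨⟨hcont, hsurj, g, hgc, hgid⟩, -, -⟩ := hsucc α δ h hcov
      exact ⟨g, fun x => congrFun hgid x, fun _ => hgc⟩
    · exact ⟨fun xα => (hseq.surjective h.le xα).choose,
        fun x => (hseq.surjective h.le x).choose_spec, fun hc => absurd hc hcov⟩
  choose sec0 hsec0 hsec0c using secEx
  have hsec : ∀ ⦃α δ : ι⦄ (hc : IsCov α δ),
      Continuous (sec0 α δ hc.1) ∧ ∀ x, r hc.1.le (sec0 α δ hc.1 x) = x :=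
    fun α δ hc => ⟨hsec0c α δ hc.1 hc.2, hsec0 α δ hc.1⟩
  have hGδ : ∀ ⦃α δ : ι⦄ (hc : IsCov α δ) (u : Set (X δ)), IsOpen u → u.Nonempty →
      ∃ G : Set (X α), G.Nonempty ∧ IsGδ G ∧ G ⊆ r hc.1.le '' u :=
    fun α δ hc => (hsucc α δ hc.1 hc.2).2.1
  have hker : ∀ q : {p : ι × ι // IsCov p.1 p.2},
      ∃ g : X q.1.2 → ℕ → unitInterval, Continuous g ∧
        Function.Injective fun z => (r q.2.1.le z, g z) :=
    fun q => (hsucc q.1.1 q.1.2 q.2.1 q.2.2).2.2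
  choose gk hgkc hgki using hker
  have hD0 : Dense (h₀ ⁻¹' SigmaProd T₀) := by
    intro x
    rw [hemb₀.toIsInducing.closure_eq_preimage_closure_image, mem_preimage,
      image_preimage_eq_inter_range, inter_comm, ← hrange₀]
    exact mem_range_self x
  have hD0cc : ∀ C : Set (X ⊥), C ⊆ h₀ ⁻¹' SigmaProd T₀ → C.Countable →
      closure C ⊆ h₀ ⁻¹' SigmaProd T₀ := by
    intro C hCsub hCc
    rw [hemb₀.toIsInducing.closure_eq_preimage_closure_image]
    exact preimage_mono (aux_sigma_cc (hCc.image h₀) (image_subset_iff.2 hCsub))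
  haveI : CompactSpace (InvLim r) :=
    isCompact_iff_compactSpace.mp (isClosed_threads r sec0 hseq hsec).isCompact
  have hDL := denseThreads r sec0 hseq hsec (h₀ ⁻¹' SigmaProd T₀) hD0 hD0cc hGδ
  have hHc := bigH_continuous r sec0 hsec h₀ gk hemb₀.continuous hgkc
  have hHi := bigH_injective r sec0 hseq hsec h₀ gk hemb₀.injective hgki
  have hHce := hHc.isClosedEmbedding hHi
  refine ⟨_, bigH r sec0 h₀ gk, hHce.toIsEmbedding, ?_⟩
  apply Subset.antisymm
  · rintro w ⟨x, rfl⟩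
    have hx := hDL x
    have h2 := image_closure_subset_closure_image hHc
      (mem_image_of_mem (bigH r sec0 h₀ gk) hx)
    refine closure_mono ?_ h2
    rintro _ ⟨d, hd, rfl⟩
    exact ⟨mem_range_self d, bigH_sigma r sec0 h₀ gk d hd.1 hd.2⟩
  · calc closure (range (bigH r sec0 h₀ gk) ∩ SigmaProd _)
        ⊆ closure (range (bigH r sec0 h₀ gk)) := closure_mono inter_subset_left
      _ = range (bigH r sec0 h₀ gk) := hHce.isClosed_range.closure_eq
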